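/- For every integer L ≥ 1 one has M_L = Σ_{s ≥ L} binom(s−1, L−1) m_s, the series on the right-hand side being convergent. -/

import Mathlib

open scoped Classical
open MeasureTheory

/-- Cumulative sums `a₀ + a₁ + ⋯ + a_k` of the regular continued fraction
expansion of `x` (`none` once the expansion has terminated). -/
noncomputable def cfSum (x : ℝ) : ℕ → Option ℝ
  | 0 => some (⌊x⌋ : ℝ)
  | (k + 1) => (cfSum x k).bind fun s =>
      ((GenContFract.of x).partDens.get? k).map fun b => s + b

/-- The Minkowski question mark function in its version on `[0, ∞)`:
`F([a₀; a₁, a₂, …]) = 1 - 2^{-a₀} + 2^{-(a₀+a₁)} - 2^{-(a₀+a₁+a₂)} + ⋯`. -/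
noncomputable def minkQ (x : ℝ) : ℝ :=
  1 + ∑' k : ℕ, (cfSum x k).elim 0 fun s => (-1 : ℝ) ^ (k + 1) * (2 : ℝ) ^ (-s)

/-- `μ` is the Lebesgue–Stieltjes measure `dF` of the Minkowski question mark
function: it is supported on `[0, ∞)` and its cumulative distribution function
is `F = minkQ` there. -/
def IsMinkowskiMeasure (μ : Measure ℝ) : Prop :=
  μ (Set.Iio 0) = 0 ∧ ∀ x : ℝ, 0 ≤ x → μ (Set.Iic x) = ENNReal.ofReal (minkQ x)

/-- The moment `m_L = ∫₀^∞ (x/(x+1))^L dF(x)`. -/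
noncomputable def mMom (μ : Measure ℝ) (L : ℕ) : ℝ :=
  ∫ x, (x / (x + 1)) ^ L ∂μ

/-- The moment `M_L = ∫₀^∞ x^L dF(x)`. -/
noncomputable def MMom (μ : Measure ℝ) (L : ℕ) : ℝ :=
  ∫ x, x ^ L ∂μ

/-! ### Auxiliary lemmas -/

lemma partDens_natCast (n k : ℕ) :
    (GenContFract.of ((n : ℕ) : ℝ)).partDens.get? k = none := by
  have h : ((n : ℕ) : ℝ) = ((n : ℤ) : ℝ) := by push_cast; rfl
  rw [GenContFract.partDens, h, GenContFract.of_s_of_int, Stream'.Seq.map_nil,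
    Stream'.Seq.get?_nil]

lemma cfSum_natCast_zero (n : ℕ) : cfSum (n : ℝ) 0 = some (n : ℝ) := by
  simp [cfSum]

lemma cfSum_natCast_succ (n k : ℕ) : cfSum (n : ℝ) (k + 1) = none := by
  show (cfSum (n : ℝ) k).bind _ = none
  rw [partDens_natCast]
  cases cfSum (n : ℝ) k <;> simp

lemma minkQ_natCast (n : ℕ) : minkQ (n : ℝ) = 1 - (2 : ℝ) ^ (-(n : ℝ)) := by
  unfold minkQ
  have h : (∑' k : ℕ, (cfSum (n : ℝ) k).elim 0
      fun s => (-1 : ℝ) ^ (k + 1) * (2 : ℝ) ^ (-s)) = -((2 : ℝ) ^ (-(n : ℝ))) := by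
    rw [tsum_eq_single 0 ?_]
    · rw [cfSum_natCast_zero]; simp
    · intro k hk
      obtain ⟨m, rfl⟩ := Nat.exists_eq_succ_of_ne_zero hk
      rw [cfSum_natCast_succ]; rfl
  rw [h]; ring

lemma hasSum_choose_mul_pow_div (L : ℕ) (hL : 1 ≤ L) (x : ℝ) (hx : 0 ≤ x) :
    HasSum (fun j : ℕ => ((L + j - 1).choose (L - 1) : ℝ) * (x / (x + 1)) ^ (L + j)) (x ^ L) := by
  have hx1 : (0:ℝ) < x + 1 := by linarith
  set t := x / (x + 1) with ht
  have ht0 : 0 ≤ t := div_nonneg hx hx1.le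
  have ht1 : t < 1 := by rw [ht, div_lt_one hx1]; linarith
  have hnorm : ‖t‖ < 1 := by rw [Real.norm_eq_abs, abs_of_nonneg ht0]; exact ht1
  obtain ⟨k, rfl⟩ : ∃ k, L = k + 1 := ⟨L - 1, (Nat.succ_pred_eq_of_pos hL).symm⟩
  have h := (hasSum_choose_mul_geometric_of_norm_lt_one k hnorm).mul_left (t ^ (k + 1))
  have h1t : (1:ℝ) - t = 1 / (x + 1) := by rw [ht]; field_simp; ring
  have hval : t ^ (k + 1) * (1 / (1 - t) ^ (k + 1)) = x ^ (k + 1) := by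
    rw [h1t, ht, div_pow, div_pow, one_pow]
    field_simp
  rw [hval] at h
  have heq : (fun j : ℕ => (((k + 1) + j - 1).choose ((k + 1) - 1) : ℝ) * t ^ ((k + 1) + j))
      = fun j : ℕ => t ^ (k + 1) * (((j + k).choose k : ℝ) * t ^ j) := by
    funext j
    have hj : (k + 1) + j - 1 = j + k := by omega
    have hj2 : (k + 1) - 1 = k := by omega
    rw [hj, hj2, pow_add]
    ring
  rw [heq]
  exact h

/-- `M_L = Σ_{s ≥ L} binom(s−1, L−1) m_s` for every `L ≥ 1`, the series being
convergent (indexing `s = L + j`, `j ≥ 0`). -/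
theorem MMom_eq_tsum_choose_mul_mMom (μ : Measure ℝ) (hμ : IsMinkowskiMeasure μ)
    (L : ℕ) (hL : 1 ≤ L) :
    (Summable fun j : ℕ => ((L + j - 1).choose (L - 1) : ℝ) * mMom μ (L + j)) ∧
    MMom μ L = ∑' j : ℕ, ((L + j - 1).choose (L - 1) : ℝ) * mMom μ (L + j) := by
  -- CDF values at natural numbers, written with `(1/2)^n`
  have hrpow : ∀ n : ℕ, (2:ℝ) ^ (-(n : ℝ)) = (1/2 : ℝ) ^ n := fun n => by
    rw [Real.rpow_neg (by norm_num), Real.rpow_natCast, one_div, inv_pow]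
  have hIic : ∀ n : ℕ, μ (Set.Iic (n : ℝ)) = ENNReal.ofReal (1 - (1/2 : ℝ) ^ n) := fun n => by
    rw [hμ.2 _ (Nat.cast_nonneg n), minkQ_natCast, hrpow]
  have hp : ∀ n : ℕ, (0:ℝ) < (1/2 : ℝ) ^ n := fun n => by positivity
  have hle1 : ∀ n : ℕ, (1/2 : ℝ) ^ n ≤ 1 := fun n =>
    pow_le_one₀ (by norm_num) (by norm_num)
  -- total mass at most one
  have huniv : μ Set.univ ≤ 1 := by
    have hU : (⋃ n : ℕ, Set.Iic ((n : ℕ) : ℝ)) = Set.univ := by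
      ext x
      simp only [Set.mem_iUnion, Set.mem_Iic, Set.mem_univ, iff_true]
      exact exists_nat_ge x
    have hdir : Directed (· ⊆ ·) fun n : ℕ => Set.Iic ((n : ℕ) : ℝ) := by
      apply Monotone.directed_le
      intro a b hab
      exact Set.Iic_subset_Iic.2 (by exact_mod_cast hab)
    rw [← hU, hdir.measure_iUnion]
    refine iSup_le fun n => ?_
    rw [hIic n]
    exact ENNReal.ofReal_le_one.2 (by linarith [hp n])
  haveI : IsFiniteMeasure μ := ⟨lt_of_le_of_lt huniv ENNReal.one_lt_top⟩
  -- tail bounds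
  have hIoi : ∀ m : ℕ, μ (Set.Ioi (m : ℝ)) ≤ ENNReal.ofReal ((1/2 : ℝ) ^ m) := by
    intro m
    have hcompl : μ (Set.Ioi (m : ℝ)) = μ Set.univ - μ (Set.Iic (m : ℝ)) := by
      rw [← Set.compl_Iic]
      exact measure_compl measurableSet_Iic (by rw [hIic m]; exact ENNReal.ofReal_ne_top)
    rw [hcompl, hIic m]
    calc μ Set.univ - ENNReal.ofReal (1 - (1/2 : ℝ) ^ m)
        ≤ 1 - ENNReal.ofReal (1 - (1/2 : ℝ) ^ m) := tsub_le_tsub huniv le_rfl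
      _ = ENNReal.ofReal ((1/2 : ℝ) ^ m) := by
          rw [← ENNReal.ofReal_one, ← ENNReal.ofReal_sub _ (by linarith [hle1 m])]
          norm_num
  have hIci : ∀ n : ℕ, μ (Set.Ici (n : ℝ)) ≤ ENNReal.ofReal (2 * (1/2 : ℝ) ^ n) := by
    intro n
    match n with
    | 0 =>
      calc μ (Set.Ici ((0 : ℕ) : ℝ)) ≤ μ Set.univ := measure_mono (Set.subset_univ _)
        _ ≤ 1 := huniv
        _ ≤ ENNReal.ofReal (2 * (1/2 : ℝ) ^ (0:ℕ)) := by
            rw [pow_zero, mul_one]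
            exact ENNReal.one_le_ofReal.2 one_le_two
    | (m + 1) =>
      have hsub : Set.Ici (((m + 1 : ℕ)) : ℝ) ⊆ Set.Ioi (m : ℝ) := by
        intro x hx
        simp only [Set.mem_Ici, Nat.cast_add, Nat.cast_one] at hx
        simp only [Set.mem_Ioi]
        linarith
      calc μ (Set.Ici (((m + 1 : ℕ)) : ℝ)) ≤ μ (Set.Ioi (m : ℝ)) := measure_mono hsub
        _ ≤ ENNReal.ofReal ((1/2 : ℝ) ^ m) := hIoi m
        _ = ENNReal.ofReal (2 * (1/2 : ℝ) ^ (m + 1)) := by rw [pow_succ]; ring_nf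
  -- the measure lives on `[0, ∞)`
  have hae : ∀ᵐ x ∂μ, (0:ℝ) ≤ x := by
    rw [MeasureTheory.ae_iff]
    have hset : {x : ℝ | ¬ (0:ℝ) ≤ x} = Set.Iio 0 := by ext x; simp [not_le]
    rw [hset]
    exact hμ.1
  -- finiteness of `∫⁻ x^L dμ`
  have htop : ∫⁻ x, ENNReal.ofReal (x ^ L) ∂μ < ⊤ := by
    set g : ℕ → ℝ → ENNReal := fun n =>
      (Set.Ico ((n : ℕ) : ℝ) ((n : ℕ) + 1)).indicator fun _ => ENNReal.ofReal (((n : ℝ) + 1) ^ L)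
      with hg
    have hptwise : ∀ᵐ x ∂μ, ENNReal.ofReal (x ^ L) ≤ ∑' n, g n x := by
      filter_upwards [hae] with x hx
      set n := ⌊x⌋.toNat with hn
      have hfl : ((n : ℕ) : ℝ) = (⌊x⌋ : ℝ) := by
        rw [hn]
        exact_mod_cast congrArg (fun z : ℤ => (z : ℝ))
          (Int.toNat_of_nonneg (Int.floor_nonneg.2 hx))
      have h1 : ((n : ℕ) : ℝ) ≤ x := by rw [hfl]; exact Int.floor_le x
      have h2 : x < (n : ℝ) + 1 := by rw [hfl]; exact Int.lt_floor_add_one x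
      have hmem : x ∈ Set.Ico ((n : ℕ) : ℝ) ((n : ℕ) + 1) := ⟨h1, h2⟩
      calc ENNReal.ofReal (x ^ L) ≤ g n x := by
            rw [hg]
            simp only [Set.indicator_of_mem hmem]
            exact ENNReal.ofReal_le_ofReal (pow_le_pow_left₀ hx h2.le L)
        _ ≤ ∑' m, g m x := ENNReal.le_tsum n
    have hmeas : ∀ n : ℕ, AEMeasurable (g n) μ :=
      fun n => (measurable_const.indicator measurableSet_Ico).aemeasurable
    calc ∫⁻ x, ENNReal.ofReal (x ^ L) ∂μ
        ≤ ∫⁻ x, ∑' n, g n x ∂μ := lintegral_mono_ae hptwise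
      _ = ∑' n, ∫⁻ x, g n x ∂μ := lintegral_tsum hmeas
      _ ≤ ∑' n : ℕ, ENNReal.ofReal (((n : ℝ) + 1) ^ L * (2 * (1/2 : ℝ) ^ n)) := by
          refine ENNReal.tsum_le_tsum fun n => ?_
          rw [hg]
          simp only []
          rw [lintegral_indicator_const measurableSet_Ico]
          rw [ENNReal.ofReal_mul (by positivity)]
          exact mul_le_mul_right ((measure_mono Set.Ico_subset_Ici_self).trans (hIci n)) _
      _ < ⊤ := by
          have hS0 : Summable fun n : ℕ => (n : ℝ) ^ L * (1/2 : ℝ) ^ n :=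
            summable_pow_mul_geometric_of_norm_lt_one L
              (by rw [Real.norm_eq_abs, abs_of_pos (by norm_num : (0:ℝ) < 1/2)]; norm_num)
          have hS1 : Summable fun n : ℕ => ((n : ℝ) + 1) ^ L * (1/2 : ℝ) ^ (n + 1) := by
            have := (summable_nat_add_iff 1).2 hS0
            refine this.congr fun n => ?_
            push_cast
            ring
          have hS : Summable fun n : ℕ => ((n : ℝ) + 1) ^ L * (2 * (1/2 : ℝ) ^ n) := by
            refine (hS1.mul_left 4).congr fun n => ?_
            rw [pow_succ]
            ring
          rw [← ENNReal.ofReal_tsum_of_nonneg (fun n => by positivity) hS]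
          exact ENNReal.ofReal_lt_top
  -- main interchange argument
  have hmt : Measurable fun x : ℝ => x / (x + 1) :=
    measurable_id.div (measurable_id.add_const 1)
  have mInt : ∀ s : ℕ, Integrable (fun x => (x / (x + 1)) ^ s) μ := by
    intro s
    refine (integrable_const (1:ℝ)).mono' ((hmt.pow_const s).aestronglyMeasurable) ?_
    filter_upwards [hae] with x hx
    have hx1 : (0:ℝ) < x + 1 := by linarith
    have h0 : 0 ≤ x / (x + 1) := div_nonneg hx hx1.le
    have h1 : x / (x + 1) ≤ 1 := by rw [div_le_one hx1]; linarith
    rw [Real.norm_eq_abs, abs_pow, abs_of_nonneg h0]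
    exact pow_le_one₀ h0 h1
  have mNonneg : ∀ s : ℕ, (0:ℝ) ≤ mMom μ s := by
    intro s
    refine integral_nonneg_of_ae ?_
    filter_upwards [hae] with x hx
    exact pow_nonneg (div_nonneg hx (by linarith)) s
  have MInt : Integrable (fun x : ℝ => x ^ L) μ := by
    refine ⟨(measurable_id.pow_const L).aestronglyMeasurable, ?_⟩
    rw [hasFiniteIntegral_iff_norm]
    have heq : (∫⁻ x, ENNReal.ofReal ‖x ^ L‖ ∂μ) = ∫⁻ x, ENNReal.ofReal (x ^ L) ∂μ := by
      refine lintegral_congr_ae ?_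
      filter_upwards [hae] with x hx
      rw [Real.norm_eq_abs, abs_of_nonneg (pow_nonneg hx L)]
    rw [heq]; exact htop
  have MNonneg : (0:ℝ) ≤ MMom μ L := by
    refine integral_nonneg_of_ae ?_
    filter_upwards [hae] with x hx
    exact pow_nonneg hx L
  set f : ℕ → ℝ → ℝ := fun j x => ((L + j - 1).choose (L - 1) : ℝ) * (x / (x + 1)) ^ (L + j)
    with hf
  have hfint : ∀ j, Integrable (f j) μ := fun j => (mInt (L + j)).const_mul _
  have hfnn : ∀ j, 0 ≤ᵐ[μ] f j := by
    intro j
    filter_upwards [hae] with x hx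
    exact mul_nonneg (Nat.cast_nonneg _) (pow_nonneg (div_nonneg hx (by linarith)) _)
  have hA : ∀ j, (∫⁻ x, ENNReal.ofReal (f j x) ∂μ)
      = ENNReal.ofReal (((L + j - 1).choose (L - 1) : ℝ) * mMom μ (L + j)) := by
    intro j
    rw [← ofReal_integral_eq_lintegral_ofReal (hfint j) (hfnn j), hf]
    simp only []
    rw [MeasureTheory.integral_const_mul]
    rfl
  have hsum : (∑' j : ℕ, ENNReal.ofReal (((L + j - 1).choose (L - 1) : ℝ) * mMom μ (L + j)))
      = ∫⁻ x, ENNReal.ofReal (x ^ L) ∂μ := by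
    have hmeasf : ∀ j : ℕ, AEMeasurable (fun x => ENNReal.ofReal (f j x)) μ := fun j =>
      (ENNReal.measurable_ofReal.comp ((hmt.pow_const (L + j)).const_mul _)).aemeasurable
    calc (∑' j : ℕ, ENNReal.ofReal (((L + j - 1).choose (L - 1) : ℝ) * mMom μ (L + j)))
        = ∑' j : ℕ, ∫⁻ x, ENNReal.ofReal (f j x) ∂μ := (tsum_congr fun j => (hA j)).symm
      _ = ∫⁻ x, ∑' j : ℕ, ENNReal.ofReal (f j x) ∂μ := (lintegral_tsum hmeasf).symm
      _ = ∫⁻ x, ENNReal.ofReal (x ^ L) ∂μ := by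
          refine lintegral_congr_ae ?_
          filter_upwards [hae] with x hx
          have hs := hasSum_choose_mul_pow_div L hL x hx
          have hterm : ∀ j : ℕ, (0:ℝ) ≤ f j x := fun j =>
            mul_nonneg (Nat.cast_nonneg _) (pow_nonneg (div_nonneg hx (by linarith)) _)
          rw [← ENNReal.ofReal_tsum_of_nonneg hterm hs.summable, hs.tsum_eq]
  have hfin : (∑' j : ℕ, ENNReal.ofReal (((L + j - 1).choose (L - 1) : ℝ) * mMom μ (L + j)))
      ≠ ⊤ := by
    rw [hsum]; exact htop.ne
  have hSummable : Summable fun j : ℕ => ((L + j - 1).choose (L - 1) : ℝ) * mMom μ (L + j) := by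
    have h := ENNReal.summable_toReal hfin
    refine h.congr fun j => ?_
    rw [ENNReal.toReal_ofReal (mul_nonneg (Nat.cast_nonneg _) (mNonneg (L + j)))]
  refine ⟨hSummable, ?_⟩
  have hM : ENNReal.ofReal (MMom μ L) = ∫⁻ x, ENNReal.ofReal (x ^ L) ∂μ := by
    rw [MMom, ← ofReal_integral_eq_lintegral_ofReal MInt ?_]
    filter_upwards [hae] with x hx
    exact pow_nonneg hx L
  have hkey : ENNReal.ofReal (MMom μ L)
      = ENNReal.ofReal (∑' j : ℕ, ((L + j - 1).choose (L - 1) : ℝ) * mMom μ (L + j)) := by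
    rw [hM, ← hsum,
      ENNReal.ofReal_tsum_of_nonneg (fun j => mul_nonneg (Nat.cast_nonneg _) (mNonneg (L + j)))
        hSummable]
  exact (ENNReal.ofReal_eq_ofReal_iff MNonneg
    (tsum_nonneg fun j => mul_nonneg (Nat.cast_nonneg _) (mNonneg (L + j)))).1 hkey
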